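/- Define the kernel S₂ on W = {(z,y) ∈ ℕ²: z ≤ y} by S₂((z₀,y₀),(z,y)) = (1−q)² (s₂(y)/s₂(y₀)) q^{y₀+y−2z} 1_{z ≤ min(y₀,y)} if z > 0, and S₂((z₀,y₀),(0,y)) = ((1−q)²/(1+q)) (s₂(y)/s₂(y₀)) q^{y₀+y}, where s₂(y) = 2y+1. Then for every (z₀,y₀) ∈ W, ∑_{(z,y)∈W} S₂((z₀,y₀),(z,y)) = 1. -/

import Mathlib

/-- The kernel S₂ on W = {(z,y) ∈ ℕ² : z ≤ y}, with s₂(y) = 2y+1. -/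
noncomputable def S2 (q : ℝ) (z0 y0 z y : ℕ) : ℝ :=
  if z = 0 then
    ((1 - q) ^ 2 / (1 + q)) * ((2 * (y : ℝ) + 1) / (2 * (y0 : ℝ) + 1)) * q ^ (y0 + y)
  else
    (if z ≤ min y0 y then (1 : ℝ) else 0) *
      ((1 - q) ^ 2 * ((2 * (y : ℝ) + 1) / (2 * (y0 : ℝ) + 1)) * q ^ (y0 + y - 2 * z))

lemma summable_lin (q a : ℝ) (hq0 : 0 < q) (hq1 : q < 1) :
    Summable (fun y : ℕ => (2 * (y:ℝ) + a) * q ^ y) := by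
  have hn : ‖q‖ < 1 := by rw [Real.norm_eq_abs, abs_of_pos hq0]; exact hq1
  have h1 : Summable (fun y : ℕ => (y:ℝ) * q ^ y) := by
    simpa using summable_pow_mul_geometric_of_norm_lt_one 1 hn
  have h2 : Summable (fun y : ℕ => q ^ y) := summable_geometric_of_lt_one hq0.le hq1
  have := (h1.mul_left 2).add (h2.mul_left a)
  convert this using 2 with y
  case e'_3 => exact rfl
  ring

lemma tsum_lin (q a : ℝ) (hq0 : 0 < q) (hq1 : q < 1) :
    ∑' y : ℕ, (2 * (y:ℝ) + a) * q ^ y = (2 * q / (1 - q) ^ 2 + a / (1 - q)) := by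
  have hn : ‖q‖ < 1 := by rw [Real.norm_eq_abs, abs_of_pos hq0]; exact hq1
  have h1 : Summable (fun y : ℕ => (y:ℝ) * q ^ y) := by
    simpa using summable_pow_mul_geometric_of_norm_lt_one 1 hn
  have h2 : Summable (fun y : ℕ => q ^ y) := summable_geometric_of_lt_one hq0.le hq1
  have key : ∑' y : ℕ, (2 * (y:ℝ) + a) * q ^ y
      = ∑' y : ℕ, (2 * ((y:ℝ) * q ^ y) + a * q ^ y) := by
    congr 1; funext y; ring
  rw [key, Summable.tsum_add (h1.mul_left 2) (h2.mul_left a), tsum_mul_left, tsum_mul_left,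
    tsum_coe_mul_geometric_of_norm_lt_one hn, tsum_geometric_of_lt_one hq0.le hq1]
  have h1q : (1:ℝ) - q ≠ 0 := by intro hc; nlinarith
  field_simp

lemma tsum_shift (g : ℕ → ℝ) (z : ℕ)
    (hg : Summable (fun y : ℕ => if z ≤ y then g y else 0)) :
    ∑' y : ℕ, (if z ≤ y then g y else 0) = ∑' y : ℕ, g (y + z) := by
  have h := Summable.sum_add_tsum_nat_add (f := fun y : ℕ => if z ≤ y then g y else 0) z hg
  have h0 : ∑ i ∈ Finset.range z, (if z ≤ i then g i else 0) = 0 := by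
    apply Finset.sum_eq_zero; intro i hi
    rw [if_neg (by simp at hi; omega)]
  rw [h0, zero_add] at h
  rw [← h]
  exact tsum_congr fun y => if_pos (Nat.le_add_left z y)

/-- S₂ is a Markov kernel on W = {(z,y) ∈ ℕ² : z ≤ y}. -/
theorem S2_is_markov (q : ℝ) (hq : q ∈ Set.Ioo (0:ℝ) 1) (z0 y0 : ℕ) (h : z0 ≤ y0) :
    ∑' p : ℕ × ℕ, (if p.1 ≤ p.2 then S2 q z0 y0 p.1 p.2 else 0) = 1 := by
  obtain ⟨hq0, hq1⟩ := hq
  have h1q : (0:ℝ) < 1 - q := by linarith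
  have h2q : (0:ℝ) < 1 + q := by linarith
  have hD : (0:ℝ) < 2 * (y0:ℝ) + 1 := by positivity
  have hne1 : (1:ℝ) + q ≠ 0 := ne_of_gt h2q
  have hne2 : (1:ℝ) - q ≠ 0 := ne_of_gt h1q
  have hneD : (2 * (y0:ℝ) + 1) ≠ 0 := ne_of_gt hD
  set f : ℕ × ℕ → ℝ := fun p => if p.1 ≤ p.2 then S2 q z0 y0 p.1 p.2 else 0 with hf_def
  -- nonnegativity
  have hf_nonneg : ∀ p, 0 ≤ f p := by
    rintro ⟨z, y⟩
    simp only [hf_def, S2]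
    split_ifs with h1 h2 h3
    · have e1 : (0:ℝ) ≤ (1-q)^2/(1+q) := div_nonneg (sq_nonneg _) h2q.le
      have e2 : (0:ℝ) ≤ (2*(y:ℝ)+1)/(2*(y0:ℝ)+1) := by positivity
      have e3 : (0:ℝ) ≤ q ^ (y0 + y) := by positivity
      exact mul_nonneg (mul_nonneg e1 e2) e3
    · have e2 : (0:ℝ) ≤ (2*(y:ℝ)+1)/(2*(y0:ℝ)+1) := by positivity
      have : (0:ℝ) ≤ (1-q)^2 * ((2*(y:ℝ)+1)/(2*(y0:ℝ)+1)) * q ^ (y0 + y - 2*z) := by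
        apply mul_nonneg (mul_nonneg (sq_nonneg _) e2) (by positivity)
      simpa using this
    · simp
    · exact le_refl 0
  -- summable bound
  have hvy : Summable (fun y : ℕ => ((2*(y:ℝ)+1) * q ^ y) * (q ^ y0)⁻¹) :=
    (summable_lin q 1 hq0 hq1).mul_right _
  have hu : Summable (fun z : ℕ => if z ≤ y0 then (1:ℝ) else 0) := by
    apply summable_of_ne_finset_zero (s := Finset.range (y0+1))
    intro z hz
    rw [if_neg (by simp at hz; omega)]
  have hb : Summable (fun p : ℕ × ℕ =>
      (if p.1 ≤ y0 then (1:ℝ) else 0) * (((2*(p.2:ℝ)+1) * q ^ p.2) * (q ^ y0)⁻¹)) := by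
    apply hu.mul_of_nonneg hvy
    · intro z; dsimp only; split_ifs <;> norm_num
    · intro y; positivity
  have hpowle : ∀ m n : ℕ, n ≤ m + y0 → q ^ m ≤ q ^ n * (q ^ y0)⁻¹ := by
    intro m n hmn
    rw [← div_eq_mul_inv, le_div_iff₀ (by positivity), ← pow_add]
    exact pow_le_pow_of_le_one hq0.le hq1.le hmn
  have hle : ∀ p : ℕ × ℕ, f p ≤
      (if p.1 ≤ y0 then (1:ℝ) else 0) * (((2*(p.2:ℝ)+1) * q ^ p.2) * (q ^ y0)⁻¹) := by
    rintro ⟨z, y⟩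
    have hy1 : (0:ℝ) ≤ 2*(y:ℝ)+1 := by positivity
    have hrhs : (0:ℝ) ≤ (if z ≤ y0 then (1:ℝ) else 0) * (((2*(y:ℝ)+1) * q ^ y) * (q ^ y0)⁻¹) := by
      apply mul_nonneg _ (by positivity)
      split_ifs <;> norm_num
    simp only [hf_def, S2]
    by_cases hzy : z ≤ y
    · rw [if_pos hzy]
      by_cases hz0 : z = 0
      · rw [if_pos hz0, if_pos (show z ≤ y0 by omega)]
        have e1 : (1-q)^2/(1+q) ≤ 1 := by rw [div_le_one h2q]; nlinarith
        have e2 : (2*(y:ℝ)+1)/(2*(y0:ℝ)+1) ≤ 2*(y:ℝ)+1 := by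
          apply div_le_self hy1
          have h0 : (0:ℝ) ≤ (y0:ℝ) := Nat.cast_nonneg _
          linarith
        have e3 : q ^ (y0 + y) ≤ q ^ y * (q ^ y0)⁻¹ := hpowle _ _ (by omega)
        calc ((1-q)^2/(1+q)) * ((2*(y:ℝ)+1)/(2*(y0:ℝ)+1)) * q ^ (y0+y)
            ≤ (1 * (2*(y:ℝ)+1)) * (q ^ y * (q ^ y0)⁻¹) := by
              apply mul_le_mul (mul_le_mul e1 e2 (by positivity) (by norm_num))
                e3 (by positivity) (by positivity)
          _ = 1 * (((2*(y:ℝ)+1) * q ^ y) * (q ^ y0)⁻¹) := by ring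
      · rw [if_neg hz0]
        by_cases hzm : z ≤ min y0 y
        · have hzy0 : z ≤ y0 := le_trans hzm (min_le_left _ _)
          rw [if_pos hzm, if_pos hzy0, one_mul]
          have e1 : (1-q)^2 ≤ 1 := by nlinarith
          have e2 : (2*(y:ℝ)+1)/(2*(y0:ℝ)+1) ≤ 2*(y:ℝ)+1 := by
            apply div_le_self hy1
            have h0 : (0:ℝ) ≤ (y0:ℝ) := Nat.cast_nonneg _
            linarith
          have e3 : q ^ (y0 + y - 2*z) ≤ q ^ y * (q ^ y0)⁻¹ := hpowle _ _ (by omega)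
          calc (1-q)^2 * ((2*(y:ℝ)+1)/(2*(y0:ℝ)+1)) * q ^ (y0+y-2*z)
              ≤ (1 * (2*(y:ℝ)+1)) * (q ^ y * (q ^ y0)⁻¹) := by
                apply mul_le_mul (mul_le_mul e1 e2 (by positivity) (by norm_num))
                  e3 (by positivity) (by positivity)
            _ = 1 * (((2*(y:ℝ)+1) * q ^ y) * (q ^ y0)⁻¹) := by ring
        · rw [if_neg hzm, zero_mul]
          exact hrhs
    · rw [if_neg hzy]
      exact hrhs
  have hf : Summable f := Summable.of_nonneg_of_le hf_nonneg hle hb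
  rw [Summable.tsum_prod' hf fun b => hf.prod_factor b]
  -- outer support finite
  have houter : ∀ z ∉ Finset.range (y0+1), ∑' y : ℕ, f (z, y) = 0 := by
    intro z hz
    simp only [Finset.mem_range] at hz
    have hzero : ∀ y : ℕ, f (z, y) = 0 := by
      intro y
      simp only [hf_def, S2]
      by_cases hzy : z ≤ y
      · rw [if_pos hzy, if_neg (show ¬ z = 0 by omega),
          if_neg (show ¬ z ≤ min y0 y by simp only [le_min_iff]; omega), zero_mul]
      · rw [if_neg hzy]
    simp only [hzero, tsum_zero]
  rw [tsum_eq_sum houter]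
  -- row z = 0
  have hrow0 : ∑' y : ℕ, f (0, y) = q ^ y0 / (2*(y0:ℝ)+1) := by
    have hterm : ∀ y : ℕ, f (0, y)
        = (((1-q)^2/(1+q)) * q ^ y0 / (2*(y0:ℝ)+1)) * ((2*(y:ℝ)+1) * q ^ y) := by
      intro y
      have h0 : f (0, y) = (1-q)^2/(1+q) * ((2*(y:ℝ)+1)/(2*(y0:ℝ)+1)) * q ^ (y0+y) := by
        simp [hf_def, S2]
      rw [h0, pow_add]
      ring
    rw [tsum_congr hterm, tsum_mul_left, tsum_lin q 1 hq0 hq1]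
    field_simp
    ring
  -- rows 1 ≤ z ≤ y0
  have hrowz : ∀ z : ℕ, 1 ≤ z → z ≤ y0 → ∑' y : ℕ, f (z, y)
      = ((2*(z:ℝ)+1) - q * (2*(z:ℝ)-1)) * q ^ (y0 - z) / (2*(y0:ℝ)+1) := by
    intro z h1z hzy0
    have hstep : ∀ y : ℕ, f (z, y)
        = (if z ≤ y then ((1-q)^2/(2*(y0:ℝ)+1)) * ((2*(y:ℝ)+1) * q ^ (y0 + y - 2*z)) else 0) := by
      intro y
      simp only [hf_def, S2]
      by_cases hzy : z ≤ y
      · rw [if_pos hzy, if_neg (show ¬ z = 0 by omega),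
          if_pos (show z ≤ min y0 y by simp only [le_min_iff]; omega), if_pos hzy]
        ring
      · rw [if_neg hzy, if_neg hzy]
    have hsummable : Summable (fun y : ℕ =>
        (if z ≤ y then ((1-q)^2/(2*(y0:ℝ)+1)) * ((2*(y:ℝ)+1) * q ^ (y0 + y - 2*z)) else 0)) :=
      (summable_congr hstep).mp (hf.prod_factor z)
    rw [tsum_congr hstep, tsum_shift _ z hsummable]
    have hterm : ∀ y : ℕ, ((1-q)^2/(2*(y0:ℝ)+1)) * ((2*((y+z:ℕ):ℝ)+1) * q ^ (y0 + (y+z) - 2*z))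
        = ((1-q)^2/(2*(y0:ℝ)+1) * q ^ (y0-z)) * ((2*(y:ℝ) + (2*(z:ℝ)+1)) * q ^ y) := by
      intro y
      have he : y0 + (y+z) - 2*z = (y0-z) + y := by omega
      rw [he, pow_add]
      push_cast
      ring
    rw [tsum_congr hterm, tsum_mul_left, tsum_lin q (2*(z:ℝ)+1) hq0 hq1]
    field_simp
    ring
  -- assemble
  rw [Finset.sum_range_succ', hrow0]
  obtain ⟨g, hg⟩ : ∃ g : ℕ → ℝ, ∀ j : ℕ, g j = (2*(j:ℝ)+1) * q ^ (y0-j) / (2*(y0:ℝ)+1) :=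
    ⟨fun j => (2*(j:ℝ)+1) * q ^ (y0-j) / (2*(y0:ℝ)+1), fun j => rfl⟩
  have hsum : ∑ i ∈ Finset.range y0, (∑' y : ℕ, f (i+1, y)) = 1 - q ^ y0 / (2*(y0:ℝ)+1) := by
    have hcong : ∀ i ∈ Finset.range y0, (∑' y : ℕ, f (i+1, y)) = g (i+1) - g i := by
      intro i hi
      simp only [Finset.mem_range] at hi
      rw [hrowz (i+1) (by omega) (by omega), hg, hg]
      have he : y0 - i = (y0 - (i+1)) + 1 := by omega
      rw [he, pow_succ]
      push_cast
      ring
    rw [Finset.sum_congr rfl hcong, Finset.sum_range_sub g y0, hg, hg]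
    simp only [Nat.sub_self, pow_zero, Nat.sub_zero, Nat.cast_zero]
    field_simp
    ring
  rw [hsum]
  ring
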